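/- Let χ = Fin 3 → Fin 3 (configurations of length n = 3 with 3 colors, generalizable to any n), and define the unnormalized Ising weight w(x) = exp((1/T)·∑_{k=1}^{n-1} (if x_k = x_{k+1} then 1 else -1)). Fix a site i with 1 ≤ i ≤ n-2 (interior site, 0-indexed). For k ∈ Fin 3 let W^(k) = {x : χ | x_i = c⁽¹⁾ ∧ x_{i+1} = c⁽ᵏ⁾}. Then ∑_{x ∈ W^(1)} w(x) = exp(2/T)·∑_{x ∈ W^(2)} w(x) = exp(2/T)·∑_{x ∈ W^(3)} w(x). -/

import Mathlib

open Finset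

/-- Unnormalized Gibbs weight of the 1-D Ising model with `N` colors on `n` sites:
`w(x) = exp((1/T) ∑_{k=1}^{n-1} (𝟙{x_k = x_{k+1}} - 𝟙{x_k ≠ x_{k+1}}))`. -/
noncomputable def isingW (N n : ℕ) (T : ℝ) (x : Fin n → Fin N) : ℝ :=
  Real.exp (1 / T * ∑ k : Fin (n - 1),
    (if x ⟨k.1, by have := k.2; omega⟩ = x ⟨k.1 + 1, by have := k.2; omega⟩
      then (1 : ℝ) else -1))

/-- Partition function of the 1-D Ising model. -/
noncomputable def isingZ (N n : ℕ) (T : ℝ) : ℝ :=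
  ∑ x : Fin n → Fin N, isingW N n T x

/-- Normalized Gibbs measure of the 1-D Ising model. -/
noncomputable def isingPi (N n : ℕ) (T : ℝ) (x : Fin n → Fin N) : ℝ :=
  isingW N n T x / isingZ N n T


set_option maxHeartbeats 2000000 in
lemma swap_key (n : ℕ) (i : ℕ) (hi2 : i ≤ n - 2) (hn : 3 ≤ n) (T : ℝ)
    (c₁ c₂ : Fin 3) (h12 : c₁ ≠ c₂) :
    (∑ x ∈ Finset.univ.filter (fun x : Fin n → Fin 3 =>
        x ⟨i, by omega⟩ = c₁ ∧ x ⟨i + 1, by omega⟩ = c₁), isingW 3 n T x)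
      = Real.exp (2 / T) * ∑ x ∈ Finset.univ.filter (fun x : Fin n → Fin 3 =>
          x ⟨i, by omega⟩ = c₁ ∧ x ⟨i + 1, by omega⟩ = c₂), isingW 3 n T x := by
  rw [Finset.mul_sum]
  set σ := Equiv.swap c₁ c₂ with hσ
  set f : (Fin n → Fin 3) → (Fin n → Fin 3) :=
    fun x j => if (j : ℕ) ≤ i then x j else σ (x j) with hf
  have hff : ∀ x, f (f x) = x := by
    intro x; funext j
    simp only [hf]
    by_cases hj : (j : ℕ) ≤ i <;> simp [hj, hσ, Equiv.swap_apply_self]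
  have hw : ∀ x : Fin n → Fin 3, x ⟨i, by omega⟩ = c₁ → x ⟨i + 1, by omega⟩ = c₁ →
      isingW 3 n T x = Real.exp (2 / T) * isingW 3 n T (f x) := by
    intro x hx1 hx2
    unfold isingW
    rw [← Real.exp_add]
    congr 1
    have hsum : (∑ k : Fin (n - 1),
        (if x ⟨k.1, by have := k.2; omega⟩ = x ⟨k.1 + 1, by have := k.2; omega⟩
          then (1 : ℝ) else -1))
      = 2 + ∑ k : Fin (n - 1),
        (if f x ⟨k.1, by have := k.2; omega⟩ = f x ⟨k.1 + 1, by have := k.2; omega⟩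
          then (1 : ℝ) else -1) := by
      have hdiff : ∀ k : Fin (n - 1),
          (if x ⟨k.1, by have := k.2; omega⟩ = x ⟨k.1 + 1, by have := k.2; omega⟩
            then (1 : ℝ) else -1)
          = (if k = ⟨i, by omega⟩ then (2:ℝ) else 0) +
            (if f x ⟨k.1, by have := k.2; omega⟩ = f x ⟨k.1 + 1, by have := k.2; omega⟩
            then (1 : ℝ) else -1) := by
        intro k
        rcases lt_trichotomy k.1 i with hk | hk | hk
        · have hk' : k ≠ ⟨i, by omega⟩ := by
            intro hh; rw [hh] at hk; exact lt_irrefl _ hk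
          simp only [hf, hk', if_false]
          have h1 : (k.1 : ℕ) ≤ i := le_of_lt hk
          have h2 : (k.1 + 1 : ℕ) ≤ i := hk
          simp [h1, h2]
        · have hk' : k = ⟨i, by omega⟩ := by ext; exact hk
          have e1 : x ⟨k.1, by have := k.2; omega⟩ = c₁ := by
            rw [show (⟨k.1, by have := k.2; omega⟩ : Fin n) = ⟨i, by omega⟩ by ext; exact hk]
            exact hx1
          have e2 : x ⟨k.1 + 1, by have := k.2; omega⟩ = c₁ := by
            rw [show (⟨k.1 + 1, by have := k.2; omega⟩ : Fin n) = ⟨i + 1, by omega⟩ by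
              ext; simp [hk]]
            exact hx2
          have g1 : f x ⟨k.1, by have := k.2; omega⟩ = c₁ := by
            simp only [hf]
            rw [if_pos (by simp [hk])]
            exact e1
          have g2 : f x ⟨k.1 + 1, by have := k.2; omega⟩ = c₂ := by
            simp only [hf]
            rw [if_neg (by simp [hk])]
            rw [e2]; exact Equiv.swap_apply_left c₁ c₂
          rw [if_pos hk', if_pos (e1.trans e2.symm), g1, g2, if_neg h12]
          norm_num
        · have hk' : k ≠ ⟨i, by omega⟩ := by
            intro hh; rw [hh] at hk; exact lt_irrefl _ hk
          simp only [hf, hk', if_false]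
          have h1 : ¬ (k.1 : ℕ) ≤ i := by omega
          have h2 : ¬ (k.1 + 1 : ℕ) ≤ i := by omega
          simp only [h1, h2, if_false]
          by_cases he : x ⟨k.1, by have := k.2; omega⟩ = x ⟨k.1 + 1, by have := k.2; omega⟩
          · simp [he]
          · rw [if_neg he, if_neg (fun hh => he (σ.injective hh))]
            norm_num
      rw [Finset.sum_congr rfl (fun k _ => hdiff k), Finset.sum_add_distrib,
        Finset.sum_ite_eq' Finset.univ (⟨i, by omega⟩ : Fin (n-1)) (fun _ => (2:ℝ))]
      simp
    rw [hsum]; ring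
  apply Finset.sum_bij' (fun x _ => f x) (fun x _ => f x)
  · intro x hx
    simp only [Finset.mem_filter, Finset.mem_univ, true_and] at hx ⊢
    constructor
    · simp only [hf]; rw [if_pos (le_refl i)]; exact hx.1
    · simp only [hf]; rw [if_neg (by omega)]; rw [hx.2]
      exact Equiv.swap_apply_left c₁ c₂
  · intro x hx
    simp only [Finset.mem_filter, Finset.mem_univ, true_and] at hx ⊢
    constructor
    · simp only [hf]; rw [if_pos (le_refl i)]; exact hx.1
    · simp only [hf]; rw [if_neg (by omega)]; rw [hx.2]
      exact Equiv.swap_apply_right c₁ c₂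
  · intro x _; exact hff x
  · intro x _; exact hff x
  · intro x hx
    simp only [Finset.mem_filter, Finset.mem_univ, true_and] at hx
    exact hw x hx.1 hx.2

/-- For the three-state 1-D Ising model and an interior site `i`
(`1 ≤ i ≤ n-2`, 0-indexed), with `W^(k) = {x | x_i = c⁽¹⁾, x_{i+1} = c⁽ᵏ⁾}`, one has
`∑_{x ∈ W^(1)} w(x) = e^{2/T} ∑_{x ∈ W^(2)} w(x) = e^{2/T} ∑_{x ∈ W^(3)} w(x)`. -/
theorem sum_W_weights_three_state (n : ℕ) (hn : 3 ≤ n) (T : ℝ) (hT : 0 < T)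
    (c₁ c₂ c₃ : Fin 3) (hc : c₁ ≠ c₂ ∧ c₁ ≠ c₃ ∧ c₂ ≠ c₃)
    (i : ℕ) (hi1 : 1 ≤ i) (hi2 : i ≤ n - 2) :
    (∑ x ∈ Finset.univ.filter (fun x : Fin n → Fin 3 =>
        x ⟨i, by omega⟩ = c₁ ∧ x ⟨i + 1, by omega⟩ = c₁), isingW 3 n T x)
      = Real.exp (2 / T) * ∑ x ∈ Finset.univ.filter (fun x : Fin n → Fin 3 =>
          x ⟨i, by omega⟩ = c₁ ∧ x ⟨i + 1, by omega⟩ = c₂), isingW 3 n T x ∧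
    (∑ x ∈ Finset.univ.filter (fun x : Fin n → Fin 3 =>
        x ⟨i, by omega⟩ = c₁ ∧ x ⟨i + 1, by omega⟩ = c₁), isingW 3 n T x)
      = Real.exp (2 / T) * ∑ x ∈ Finset.univ.filter (fun x : Fin n → Fin 3 =>
          x ⟨i, by omega⟩ = c₁ ∧ x ⟨i + 1, by omega⟩ = c₃), isingW 3 n T x := by
  exact ⟨swap_key n i hi2 hn T c₁ c₂ hc.1, swap_key n i hi2 hn T c₁ c₃ hc.2.1⟩
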